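/- Let q = 2^s, F = 𝔽_{q²}, n = 2q², and let (a₁,b₁),…,(a_n,b_n) be an enumeration of all pairs in F × F with b_k² + b_k = a_k^{q+1}. For a nonnegative integer m let C_m ⊆ F^n be the F-linear span of the vectors ((a_k)^i (b_k)^j)_{k=1,…,n} over all pairs (i,j) of nonnegative integers with j ≤ 1 and 2i + (q+1)j ≤ m. Then for every integer m with 0 ≤ m ≤ 2q² + q − 2, the Euclidean dual of C_m equals C_{2q²+q−2−m}, i.e. {v ∈ F^n : Σ_{k=1}^n v_k c_k = 0 for all c ∈ C_m} = C_{2q²+q−2−m}. -/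

import Mathlib

open Finset Polynomial

lemma aux_pair {F : Type} [Field F] [CharP F 2] {c b x : F} (hb : b^2+b=c) (hx : x^2+x=c) :
    x = b ∨ x = b + 1 := by
  have two0 : (2:F) = 0 := CharTwo.two_eq_zero
  have h : (x + b) * (x + b + 1) = 0 := by
    have h2 : (x + b)^2 + (x + b) = 0 := by
      rw [CharTwo.add_sq]
      linear_combination hx + hb + c * two0
    linear_combination h2
  rcases mul_eq_zero.mp h with h | h
  · left
    have := eq_neg_of_add_eq_zero_left h
    rwa [CharTwo.neg_eq] at this
  · right
    have : x = -(b+1) := by linear_combination h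
    rwa [CharTwo.neg_eq] at this

lemma aux_bfiber_card {F : Type} [Field F] [Fintype F] [CharP F 2] [DecidableEq F] (c : F) :
    (univ.filter (fun b : F => b^2+b=c)).card ≤ 2 := by
  rcases (univ.filter (fun b : F => b^2+b=c)).eq_empty_or_nonempty with h | ⟨b, hb⟩
  · rw [h]; simp
  · simp only [mem_filter, mem_univ, true_and] at hb
    calc (univ.filter (fun b : F => b^2+b=c)).card ≤ ({b, b+1} : Finset F).card := by
          apply Finset.card_le_card
          intro x hx
          simp only [mem_filter, mem_univ, true_and] at hx
          simp only [mem_insert, mem_singleton]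
          exact aux_pair hb hx
      _ ≤ 2 := (Finset.card_insert_le _ _).trans (by simp)

lemma aux_bfiber_eq {F : Type} [Field F] [Fintype F] [CharP F 2] [DecidableEq F] {c b₀ : F}
    (hb₀ : b₀^2 + b₀ = c) :
    univ.filter (fun b : F => b^2+b=c) = {b₀, b₀+1} := by
  ext x
  simp only [mem_filter, mem_univ, true_and, mem_insert, mem_singleton]
  constructor
  · intro hx; exact aux_pair hb₀ hx
  · rintro (rfl | rfl)
    · exact hb₀
    · rw [CharTwo.add_sq, one_pow]
      linear_combination hb₀ + CharTwo.add_self_eq_zero (1:F)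

lemma aux_sum (q n : ℕ) (hq2 : 2 ≤ q) (F : Type) [Field F] [Fintype F] [CharP F 2] [DecidableEq F]
    (hF : Fintype.card F = q^2) (hn : n = 2*q^2)
    (pt : Fin n → F × F) (hinj : Function.Injective pt)
    (hrange : ∀ p : F × F, p ∈ Set.range pt ↔ p.2 ^ 2 + p.2 = p.1 ^ (q + 1))
    (hfib : ∀ a : F, ∃ b : F, b^2 + b = a^(q+1))
    (I J : ℕ) (hJ : J ≤ 2) (hIJ : 2*I + (q+1)*J ≤ 2*q^2+q-2) :
    ∑ k : Fin n, (pt k).1^I * (pt k).2^J = 0 := by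
  have hq4 : 4 ≤ q^2 := by nlinarith
  set curve : Finset (F × F) := univ.filter (fun p => p.2^2+p.2 = p.1^(q+1)) with hcurve
  -- reindex
  have h1 : ∑ k : Fin n, (pt k).1^I * (pt k).2^J = ∑ p ∈ curve, p.1^I * p.2^J := by
    apply Finset.sum_bij (fun k _ => pt k)
    · intro k _
      rw [hcurve, mem_filter]
      exact ⟨mem_univ _, (hrange (pt k)).mp ⟨k, rfl⟩⟩
    · intro k _ k' _ h; exact hinj h
    · intro p hp
      rw [hcurve, mem_filter] at hp
      obtain ⟨k, hk⟩ := (hrange p).mpr hp.2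
      exact ⟨k, mem_univ _, hk⟩
    · intro k _; rfl
  rw [h1]
  rw [← Finset.sum_fiberwise_of_maps_to (g := Prod.fst) (t := univ) (fun x _ => mem_univ _)]
  have h2 : ∀ a : F, ∑ p ∈ curve.filter (fun p => p.1 = a), p.1^I * p.2^J
      = a^I * ∑ b ∈ univ.filter (fun b : F => b^2+b=a^(q+1)), b^J := by
    intro a
    rw [Finset.mul_sum]
    apply Finset.sum_bij (fun p _ => p.2)
    · intro p hp
      simp only [hcurve, mem_filter, mem_univ, true_and] at hp ⊢
      rw [hp.2] at hp; exact hp.1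
    · intro p hp p' hp' h
      simp only [hcurve, mem_filter, mem_univ, true_and] at hp hp'
      exact Prod.ext (hp.2.trans hp'.2.symm) h
    · intro b hb
      simp only [mem_filter, mem_univ, true_and] at hb
      refine ⟨(a, b), ?_, rfl⟩
      rw [mem_filter]
      exact ⟨by rw [hcurve, mem_filter]; exact ⟨mem_univ _, hb⟩, rfl⟩
    · intro p hp
      simp only [hcurve, mem_filter, mem_univ, true_and] at hp
      rw [hp.2]
  simp only [h2]
  -- inner sums
  choose b hb using hfib
  have hne : ∀ a : F, b a ≠ b a + 1 := fun a => by
    intro h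
    have := (add_eq_left (a := b a) (b := 1)).mp h.symm
    exact one_ne_zero this
  have hpair : ∀ a : F, univ.filter (fun x : F => x^2+x=a^(q+1)) = {b a, b a + 1} :=
    fun a => aux_bfiber_eq (hb a)
  simp only [hpair]
  have hsum : ∀ a : F, ∑ x ∈ ({b a, b a + 1} : Finset F), x^J = (b a)^J + (b a + 1)^J :=
    fun a => Finset.sum_pair (hne a)
  simp only [hsum]
  interval_cases J
  · simp only [pow_zero]
    have : (1:F) + 1 = 0 := CharTwo.add_self_eq_zero 1
    simp [this]
  · have hIlt : I < Fintype.card F - 1 := by rw [hF]; omega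
    have : ∀ a : F, (b a)^1 + (b a + 1)^1 = 1 := fun a => by
      rw [pow_one, pow_one]
      linear_combination CharTwo.add_self_eq_zero (b a)
    simp only [this, mul_one]
    exact FiniteField.sum_pow_lt_card_sub_one F I hIlt
  · have hIlt : I < Fintype.card F - 1 := by rw [hF]; omega
    have : ∀ a : F, (b a)^2 + (b a + 1)^2 = 1 := fun a => by
      rw [CharTwo.add_sq, one_pow]
      linear_combination CharTwo.add_self_eq_zero ((b a)^2)
    simp only [this, mul_one]
    exact FiniteField.sum_pow_lt_card_sub_one F I hIlt

lemma aux_char (s q : ℕ) (hs : 0 < s) (hq : q = 2^s)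
    (F : Type) [Field F] [Fintype F] (hF : Fintype.card F = q^2) : CharP F 2 := by
  obtain ⟨k, hp, hcard⟩ := FiniteField.card F (ringChar F)
  have h2 : ringChar F ∣ 2 := by
    have : ringChar F ∣ 2 ^ (s * 2) := by
      rw [pow_mul, ← hq, ← hF, hcard]
      exact dvd_pow_self _ (by positivity)
    exact hp.dvd_of_dvd_pow this
  have : ringChar F = 2 := ((Nat.prime_dvd_prime_iff_eq hp Nat.prime_two).mp h2)
  rw [← this]; exact ringChar.charP F

lemma aux_fiber_nonempty (q n : ℕ) (F : Type) [Field F] [Fintype F] [CharP F 2] [DecidableEq F]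
    (hF : Fintype.card F = q^2) (hn : n = 2*q^2)
    (pt : Fin n → F × F) (hinj : Function.Injective pt)
    (hrange : ∀ p : F × F, p ∈ Set.range pt ↔ p.2 ^ 2 + p.2 = p.1 ^ (q + 1)) :
    ∀ a : F, ∃ b : F, b^2 + b = a^(q+1) := by
  by_contra hcon
  push_neg at hcon
  obtain ⟨a₀, ha₀⟩ := hcon
  set curve : Finset (F × F) := univ.filter (fun p => p.2^2+p.2 = p.1^(q+1)) with hcurve
  have h1 : n ≤ curve.card := by
    have hmaps : ∀ k ∈ (univ : Finset (Fin n)), pt k ∈ curve := by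
      intro k _
      rw [hcurve, mem_filter]
      exact ⟨mem_univ _, (hrange (pt k)).mp ⟨k, rfl⟩⟩
    have := Finset.card_le_card_of_injOn pt hmaps hinj.injOn
    simpa using this
  have h2 : curve.card = ∑ a : F, (curve.filter (fun p => p.1 = a)).card :=
    Finset.card_eq_sum_card_fiberwise (fun x _ => mem_univ _)
  have h3 : ∀ a : F, (curve.filter (fun p => p.1 = a)).card
      = (univ.filter (fun b : F => b^2+b=a^(q+1))).card := by
    intro a
    apply Finset.card_bij (fun p _ => p.2)
    · intro p hp
      simp only [hcurve, mem_filter, mem_univ, true_and] at hp ⊢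
      rw [hp.2] at hp
      exact hp.1
    · intro p hp p' hp' h
      simp only [hcurve, mem_filter, mem_univ, true_and] at hp hp'
      exact Prod.ext (hp.2.trans hp'.2.symm) h
    · intro b hb
      simp only [mem_filter, mem_univ, true_and] at hb
      exact ⟨(a, b), by simp [hcurve, hb], rfl⟩
  have h4 : ∀ a : F, (univ.filter (fun b : F => b^2+b=a^(q+1))).card
      ≤ if a = a₀ then 0 else 2 := by
    intro a
    by_cases h : a = a₀
    · rw [if_pos h, Nat.le_zero, Finset.card_eq_zero, Finset.filter_eq_empty_iff]
      intro b _
      rw [h]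
      exact ha₀ b
    · simp only [if_neg h]
      exact aux_bfiber_card _
  have h5 : ∑ a : F, ((univ.filter (fun b : F => b^2+b=a^(q+1))).card)
      ≤ ∑ a : F, if a = a₀ then 0 else 2 := Finset.sum_le_sum (fun a _ => h4 a)
  have h6 : (∑ a : F, if a = a₀ then 0 else 2) = 2 * q^2 - 2 := by
    rw [Finset.sum_ite]
    simp only [Finset.sum_const, smul_eq_mul, mul_zero, zero_add, mul_comm]
    rw [Finset.filter_ne', Finset.card_erase_of_mem (mem_univ _)]
    simp only [Finset.card_univ, hF]
    have : 0 < q^2 := hF ▸ Fintype.card_pos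
    omega
  have hq1 : 0 < q^2 := hF ▸ Fintype.card_pos
  rw [h2] at h1
  simp only [h3] at h1
  omega

noncomputable def polyOf {F : Type} [Field F] {N : ℕ} (c : Fin N → F) : Polynomial F :=
  ∑ i : Fin N, Polynomial.C (c i) * Polynomial.X ^ (i : ℕ)

lemma polyOf_eval {F : Type} [Field F] {N : ℕ} (c : Fin N → F) (x : F) :
    (polyOf c).eval x = ∑ i : Fin N, c i * x ^ (i : ℕ) := by
  simp [polyOf, eval_finset_sum]

lemma polyOf_coeff {F : Type} [Field F] {N : ℕ} (c : Fin N → F) (i : Fin N) :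
    (polyOf c).coeff (i : ℕ) = c i := by
  rw [polyOf, finset_sum_coeff]
  rw [Finset.sum_eq_single i]
  · simp
  · intro j _ hj
    simp only [coeff_C_mul, coeff_X_pow]
    rw [if_neg (by simpa [Fin.val_eq_val] using (Ne.symm hj)), mul_zero]
  · simp

lemma polyOf_natDegree_lt {F : Type} [Field F] {N : ℕ} (c : Fin N → F) (d : ℕ) (hd : 0 < d)
    (hc : ∀ i : Fin N, d ≤ (i : ℕ) → c i = 0) : (polyOf c).natDegree < d := by
  have : (polyOf c).natDegree ≤ d - 1 := by
    apply Polynomial.natDegree_sum_le_of_forall_le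
    intro i _
    by_cases h : d ≤ (i : ℕ)
    · rw [hc i h]; simp
    · exact (natDegree_C_mul_le _ _).trans (by rw [natDegree_X_pow]; omega)
  omega

lemma aux_rank (q n : ℕ) (F : Type) [Field F] [Fintype F] [CharP F 2] [DecidableEq F]
    (hF : Fintype.card F = q^2)
    (pt : Fin n → F × F)
    (hrange : ∀ p : F × F, p ∈ Set.range pt ↔ p.2 ^ 2 + p.2 = p.1 ^ (q + 1))
    (hfib : ∀ a : F, ∃ b : F, b^2 + b = a^(q+1))
    (m N₀ N₁ : ℕ) (hN₀ : N₀ = m/2 + 1) (hN₁ : N₁ = if q+1 ≤ m then (m-(q+1))/2 + 1 else 0) :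
    N₀ + N₁ - (N₀ - q^2) - (N₁ - q^2)
      ≤ Module.finrank F (Submodule.span F
        {v : Fin n → F | ∃ i j : ℕ, j ≤ 1 ∧ 2 * i + (q + 1) * j ≤ m ∧
          v = fun k => (pt k).1 ^ i * (pt k).2 ^ j} : Submodule F (Fin n → F)) := by
  have hQpos : 0 < q^2 := hF ▸ Fintype.card_pos
  set v : Fin N₀ ⊕ Fin N₁ → (Fin n → F) := fun t => match t with
    | .inl i => fun k => (pt k).1 ^ (i : ℕ)
    | .inr i => fun k => (pt k).1 ^ (i : ℕ) * (pt k).2 with hv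
  have hset : Set.range v = {w : Fin n → F | ∃ i j : ℕ, j ≤ 1 ∧ 2 * i + (q + 1) * j ≤ m ∧
      w = fun k => (pt k).1 ^ i * (pt k).2 ^ j} := by
    ext w
    constructor
    · rintro ⟨t, rfl⟩
      match t with
      | .inl i =>
        refine ⟨(i : ℕ), 0, by omega, ?_, ?_⟩
        · have h2 := i.isLt; omega
        · funext k; simp [hv]
      | .inr i =>
        have hq1 : q + 1 ≤ m := by
          by_contra h
          rw [hN₁, if_neg h] at i
          exact (Nat.not_lt_zero _ i.isLt).elim
        have h2 := i.isLt
        have h3 : N₁ = (m-(q+1))/2 + 1 := by rw [hN₁, if_pos hq1]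
        refine ⟨(i : ℕ), 1, le_refl _, by omega, ?_⟩
        funext k; simp [hv]
    · rintro ⟨i, j, hj, hb, rfl⟩
      interval_cases j
      · refine ⟨.inl ⟨i, by omega⟩, ?_⟩
        funext k; simp [hv]
      · have hq1 : q + 1 ≤ m := by omega
        have h3 : N₁ = (m-(q+1))/2 + 1 := by rw [hN₁, if_pos hq1]
        refine ⟨.inr ⟨i, by omega⟩, ?_⟩
        funext k; simp [hv]
  set φ := (Fintype.linearCombination F v) with hφ
  have hφrange : LinearMap.range φ = Submodule.span F
      {w : Fin n → F | ∃ i j : ℕ, j ≤ 1 ∧ 2 * i + (q + 1) * j ≤ m ∧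
        w = fun k => (pt k).1 ^ i * (pt k).2 ^ j} := by
    rw [hφ, Fintype.range_linearCombination, hset]
  set g : Fin (N₀ - q^2) ⊕ Fin (N₁ - q^2) → Fin N₀ ⊕ Fin N₁ := fun t => match t with
    | .inl i => .inl ⟨q^2 + (i : ℕ), by have := i.isLt; omega⟩
    | .inr i => .inr ⟨q^2 + (i : ℕ), by have := i.isLt; omega⟩ with hg
  set ψ := (LinearMap.funLeft F F g) ∘ₗ (LinearMap.ker φ).subtype with hψ
  have hψinj : Function.Injective ψ := by
    rw [← LinearMap.ker_eq_bot, eq_bot_iff]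
    rintro ⟨c, hcmem⟩ hker
    rw [LinearMap.mem_ker] at hker
    have hc : ((Fintype.linearCombination F v)) c = 0 := hφ ▸ hcmem
    have hhi : ∀ t, c (g t) = 0 := by
      intro t
      have := congr_fun hker t
      simpa [hψ, LinearMap.funLeft_apply] using this
    have hhigh₀ : ∀ i : Fin N₀, q^2 ≤ (i : ℕ) → c (.inl i) = 0 := by
      intro i hi
      have h := hhi (.inl ⟨(i : ℕ) - q^2, by have := i.isLt; omega⟩)
      rw [hg] at h
      simp only at h
      convert h using 3
      exact Fin.ext (by simp; omega)
    have hhigh₁ : ∀ i : Fin N₁, q^2 ≤ (i : ℕ) → c (.inr i) = 0 := by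
      intro i hi
      have h := hhi (.inr ⟨(i : ℕ) - q^2, by have := i.isLt; omega⟩)
      rw [hg] at h
      simp only at h
      convert h using 3
      exact Fin.ext (by simp; omega)
    set f₀ := polyOf (fun i => c (.inl i)) with hf₀
    set f₁ := polyOf (fun i => c (.inr i)) with hf₁
    have heval : ∀ k, f₀.eval ((pt k).1) + f₁.eval ((pt k).1) * (pt k).2 = 0 := by
      intro k
      have h := congr_fun hc k
      rw [Fintype.linearCombination_apply] at h
      simp only [Finset.sum_apply, Pi.smul_apply, smul_eq_mul, Pi.zero_apply] at h
      rw [Fintype.sum_sum_type] at h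
      rw [hf₀, hf₁, polyOf_eval, polyOf_eval, Finset.sum_mul]
      rw [← h]
      congr 1 <;>
        · apply Finset.sum_congr rfl
          intro i _
          simp [hv, mul_assoc]
    have hboth : ∀ a : F, f₀.eval a = 0 ∧ f₁.eval a = 0 := by
      intro a
      obtain ⟨b, hb⟩ := hfib a
      obtain ⟨k₁, hk₁⟩ := (hrange (a, b)).mpr hb
      have hb' : (b+1)^2 + (b+1) = a^(q+1) := by
        rw [CharTwo.add_sq, one_pow]
        linear_combination hb + CharTwo.add_self_eq_zero (1:F)
      obtain ⟨k₂, hk₂⟩ := (hrange (a, b+1)).mpr hb'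
      have e₁ := heval k₁
      have e₂ := heval k₂
      rw [hk₁] at e₁
      rw [hk₂] at e₂
      simp only at e₁ e₂
      have hf1 : f₁.eval a = 0 := by linear_combination e₂ - e₁
      exact ⟨by linear_combination e₁ - b * hf1, hf1⟩
    have hz₀ : f₀ = 0 :=
      Polynomial.eq_zero_of_natDegree_lt_card_of_eval_eq_zero f₀
        (f := (id : F → F)) Function.injective_id (fun a => (hboth a).1)
        (by rw [show Fintype.card F = q^2 from hF] at *
            exact polyOf_natDegree_lt _ _ hQpos hhigh₀)
    have hz₁ : f₁ = 0 :=
      Polynomial.eq_zero_of_natDegree_lt_card_of_eval_eq_zero f₁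
        (f := (id : F → F)) Function.injective_id (fun a => (hboth a).2)
        (by rw [show Fintype.card F = q^2 from hF] at *
            exact polyOf_natDegree_lt _ _ hQpos hhigh₁)
    have hc0 : c = 0 := by
      funext t
      match t with
      | .inl i =>
        have := polyOf_coeff (fun i => c (.inl i)) i
        rw [← hf₀, hz₀] at this
        simpa using this.symm
      | .inr i =>
        have := polyOf_coeff (fun i => c (.inr i)) i
        rw [← hf₁, hz₁] at this
        simpa using this.symm
    simp only [Submodule.mem_bot]
    exact Subtype.ext hc0
  have hrn := LinearMap.finrank_range_add_finrank_ker φ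
  have hdom : Module.finrank F (Fin N₀ ⊕ Fin N₁ → F) = N₀ + N₁ := by
    rw [Module.finrank_pi, Fintype.card_sum, Fintype.card_fin, Fintype.card_fin]
  have hker : Module.finrank F (LinearMap.ker φ) ≤ (N₀ - q^2) + (N₁ - q^2) := by
    have := LinearMap.finrank_le_finrank_of_injective hψinj
    rwa [Module.finrank_pi, Fintype.card_sum, Fintype.card_fin, Fintype.card_fin] at this
  rw [hdom] at hrn
  rw [← hφrange]
  omega

lemma aux_arith (q Q m m' : ℕ) (hq : 2 ≤ q) (hQ : 2*q ≤ Q)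
    (hmm : m + m' = 2*Q + q - 2) :
    2*Q ≤ ((m/2 + 1) + (if q+1 ≤ m then (m-(q+1))/2 + 1 else 0)
            - ((m/2 + 1) - Q) - ((if q+1 ≤ m then (m-(q+1))/2 + 1 else 0) - Q))
        + ((m'/2 + 1) + (if q+1 ≤ m' then (m'-(q+1))/2 + 1 else 0)
            - ((m'/2 + 1) - Q) - ((if q+1 ≤ m' then (m'-(q+1))/2 + 1 else 0) - Q)) := by
  split_ifs <;> omega

noncomputable def dotForm (F : Type) [Field F] (n : ℕ) : LinearMap.BilinForm F (Fin n → F) :=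
  LinearMap.mk₂ F (fun v w => ∑ k, v k * w k)
    (fun v v' w => by simp [add_mul, Finset.sum_add_distrib])
    (fun a v w => by simp [Finset.mul_sum, mul_assoc])
    (fun v w w' => by simp [mul_add, Finset.sum_add_distrib])
    (fun a v w => by simp [Finset.mul_sum]; ring_nf; simp [mul_assoc, mul_comm, mul_left_comm])

lemma dotForm_apply {F : Type} [Field F] {n : ℕ} (v w : Fin n → F) :
    dotForm F n v w = ∑ k, v k * w k := rfl

lemma dotForm_refl {F : Type} [Field F] {n : ℕ} : (dotForm F n).IsRefl := by
  intro v w h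
  rw [dotForm_apply] at h ⊢
  rw [← h]
  exact Finset.sum_congr rfl (fun k _ => mul_comm _ _)

lemma dotForm_nondeg {F : Type} [Field F] {n : ℕ} : (dotForm F n).Nondegenerate := by
  refine (LinearMap.IsRefl.nondegenerate_iff_separatingLeft (dotForm_refl : LinearMap.IsRefl (dotForm F n))).mpr ?_
  intro v hv
  funext k
  have := hv (Pi.single k 1)
  rw [dotForm_apply] at this
  simpa [Pi.single_apply, Finset.sum_ite_eq'] using this

set_option maxHeartbeats 1000000 in
theorem first_curve_euclidean_dual (s : ℕ) (hs : 0 < s) (q : ℕ) (hq : q = 2 ^ s)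
    (F : Type) [Field F] [Fintype F] (hF : Fintype.card F = q ^ 2)
    (n : ℕ) (hn : n = 2 * q ^ 2)
    (pt : Fin n → F × F) (hinj : Function.Injective pt)
    (hrange : ∀ p : F × F, p ∈ Set.range pt ↔ p.2 ^ 2 + p.2 = p.1 ^ (q + 1))
    (C : ℕ → Submodule F (Fin n → F))
    (hC : ∀ m : ℕ, C m = Submodule.span F
      {v : Fin n → F | ∃ i j : ℕ, j ≤ 1 ∧ 2 * i + (q + 1) * j ≤ m ∧
        v = fun k => (pt k).1 ^ i * (pt k).2 ^ j})
    (m : ℕ) (hm : m ≤ 2 * q ^ 2 + q - 2) :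
    {v : Fin n → F | ∀ c ∈ C m, ∑ k, v k * c k = 0}
      = (C (2 * q ^ 2 + q - 2 - m) : Set (Fin n → F)) := by
  haveI : CharP F 2 := aux_char s q hs hq F hF
  haveI : DecidableEq F := Classical.decEq F
  have hq2 : 2 ≤ q := by
    rw [hq]
    calc 2 = 2^1 := (pow_one 2).symm
    _ ≤ 2^s := Nat.pow_le_pow_right (by norm_num) hs
  have hfib := aux_fiber_nonempty q n F hF hn pt hinj hrange
  set m' := 2 * q ^ 2 + q - 2 - m with hm'
  set B := dotForm F n with hB
  -- the dual set is the orthogonal complement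
  have hset : {v : Fin n → F | ∀ c ∈ C m, ∑ k, v k * c k = 0}
      = (B.orthogonal (C m) : Set (Fin n → F)) := by
    ext v
    simp only [Set.mem_setOf_eq, SetLike.mem_coe,
      LinearMap.BilinForm.mem_orthogonal_iff, LinearMap.BilinForm.isOrtho_def]
    constructor
    · intro h c hc
      rw [hB, dotForm_apply, Finset.sum_congr rfl (fun k _ => mul_comm (c k) (v k))]
      exact h c hc
    · intro h c hc
      have := h c hc
      rw [hB, dotForm_apply, Finset.sum_congr rfl (fun k _ => mul_comm (c k) (v k))] at this
      exact this
  -- C m' is contained in the orthogonal complement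
  have hle : C m' ≤ B.orthogonal (C m) := by
    rw [hC m', Submodule.span_le]
    rintro w ⟨i', j', hj', hb', rfl⟩
    rw [SetLike.mem_coe, LinearMap.BilinForm.mem_orthogonal_iff]
    have hker : C m ≤ LinearMap.ker
        (B.flip (fun k => (pt k).1 ^ i' * (pt k).2 ^ j')) := by
      rw [hC m, Submodule.span_le]
      rintro c ⟨i, j, hj, hbnd, rfl⟩
      rw [SetLike.mem_coe, LinearMap.mem_ker]
      have : B (fun k => (pt k).1 ^ i * (pt k).2 ^ j)
          (fun k => (pt k).1 ^ i' * (pt k).2 ^ j') = 0 := by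
        rw [hB, dotForm_apply]
        have hre : ∀ k : Fin n, ((pt k).1 ^ i * (pt k).2 ^ j) * ((pt k).1 ^ i' * (pt k).2 ^ j')
            = (pt k).1 ^ (i + i') * (pt k).2 ^ (j + j') := by
          intro k; rw [pow_add, pow_add]; ring
        rw [Finset.sum_congr rfl (fun k _ => hre k)]
        refine aux_sum q n hq2 F hF hn pt hinj hrange hfib (i+i') (j+j') (by omega) ?_
        have hXY : 2*(i+i') + (q+1)*(j+j')
            = (2*i+(q+1)*j) + (2*i'+(q+1)*j') := by ring
        omega
      exact this
    intro c hc
    exact hker hc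
  -- dimension counting
  have hr1 := aux_rank q n F hF pt hrange hfib m _ _ rfl rfl
  have hr2 := aux_rank q n F hF pt hrange hfib m' _ _ rfl rfl
  rw [← hC m] at hr1
  rw [← hC m'] at hr2
  have harith := aux_arith q (q^2) m m' hq2 (by nlinarith) (by omega)
  have hsum2 : 2 * q^2 ≤ Module.finrank F (C m) + Module.finrank F (C m') := by
    have := le_trans harith (Nat.add_le_add hr1 hr2)
    omega
  have horth : Module.finrank F (B.orthogonal (C m))
      = Module.finrank F (Fin n → F) - Module.finrank F (C m) :=
    LinearMap.BilinForm.finrank_orthogonal dotForm_nondeg (C m)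
  have hnn : Module.finrank F (Fin n → F) = n := by
    rw [Module.finrank_pi, Fintype.card_fin]
  have hfle : Module.finrank F (C m') ≤ n := by
    have := Submodule.finrank_le (C m')
    rwa [hnn] at this
  have heq : C m' = B.orthogonal (C m) := by
    apply Submodule.eq_of_le_of_finrank_le hle
    rw [horth, hnn]
    omega
  rw [hset, ← heq]
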